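/- arXiv:1101.3911 — 2 statements merged into one kernel-verified Lean document; each statement's English description precedes it below -/
import Mathlib

section
/- For every p > 1 and every x ∈ (0,1), the following identities hold: arcsin_p(x/(1+x^p)^(1/p)) = arctan_p(x); arcsin_p(x) = arctan_p(x/(1−x^p)^(1/p)); arccos_p(x) = arctan_p((1−x^p)^(1/p)/x); and arccos_p(1/(1+x^p)^(1/p)) = arctan_p(x). -/
open Real

/-- The generalized inverse sine: `arcsin_p x = ∫₀ˣ (1 - tᵖ)^(-1/p) dt`. -/
noncomputable def arcsinp (p x : ℝ) : ℝ := ∫ t in (0:ℝ)..x, (1 - t ^ p) ^ (-1 / p)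

/-- The generalized inverse tangent: `arctan_p x = ∫₀ˣ (1 + tᵖ)⁻¹ dt`. -/
noncomputable def arctanp (p x : ℝ) : ℝ := ∫ t in (0:ℝ)..x, (1 + t ^ p)⁻¹

/-- The generalized inverse cosine: `arccos_p x = arcsin_p ((1 - xᵖ)^(1/p))`. -/
noncomputable def arccosp (p x : ℝ) : ℝ := arcsinp p ((1 - x ^ p) ^ (1 / p))

lemma my_sp_helper {p s : ℝ} (hp : 1 < p) (hs : 0 ≤ s) : s * s ^ (p - 1) = s ^ p := by
  rcases hs.eq_or_lt with h | h
  · rw [← h, Real.zero_rpow (by linarith : p - 1 ≠ 0),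
      Real.zero_rpow (by linarith : (p:ℝ) ≠ 0), mul_zero]
  · nth_rewrite 1 [← Real.rpow_one s]
    rw [← Real.rpow_add h]
    ring_nf

lemma my_rpow_neg_inv {a p : ℝ} (ha : 0 ≤ a) : a ^ (-1/p) = (a ^ (1/p))⁻¹ := by
  rw [neg_div, Real.rpow_neg ha]

lemma my_fpow {p s c : ℝ} (hp : 1 < p) (hs : 0 ≤ s) (hc : 0 < c) :
    (s * c ^ (-1/p)) ^ p = s ^ p * c⁻¹ := by
  have hp0 : (p:ℝ) ≠ 0 := by linarith
  rw [Real.mul_rpow hs (Real.rpow_nonneg hc.le _), ← Real.rpow_mul hc.le]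
  rw [div_mul_cancel₀, Real.rpow_neg_one]
  exact hp0

lemma my_hasDerivAt {p : ℝ} (ε : ℝ) (hp : 1 < p) {s : ℝ} (hs : 0 ≤ s)
    (hA : 0 < 1 + ε * s ^ p) :
    HasDerivAt (fun s => s * (1 + ε * s ^ p) ^ (-1/p)) ((1 + ε * s ^ p) ^ (-1/p - 1)) s := by
  have hp0 : (p:ℝ) ≠ 0 := by linarith
  have h1 : HasDerivAt (fun s : ℝ => 1 + ε * s ^ p) (ε * (p * s ^ (p - 1))) s :=
    ((Real.hasDerivAt_rpow_const (Or.inr hp.le)).const_mul ε).const_add 1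
  have h2 := h1.rpow_const (p := -1/p) (Or.inl hA.ne')
  have h3 := (hasDerivAt_id s).mul h2
  convert h3 using 1
  · rfl
  · rfl
  · rfl
  have e1 : (1 + ε * s ^ p) ^ (-1/p) = (1 + ε * s ^ p) ^ (-1/p - 1) * (1 + ε * s ^ p) := by
    nth_rewrite 1 [show -1/p = -1/p - 1 + 1 by ring]
    rw [Real.rpow_add_one hA.ne']
  rw [e1]
  rw [show id s * (ε * (p * s ^ (p - 1)) * (-1/p) * (1 + ε * s ^ p) ^ (-1/p - 1))
      = (s * s ^ (p - 1)) * (ε * (p * (-1/p))) * (1 + ε * s ^ p) ^ (-1/p - 1) from by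
    simp [id]; ring]
  rw [my_sp_helper hp hs, show p * (-1/p) = -1 from by field_simp]
  ring

lemma my_id1 (p x : ℝ) (hp : 1 < p) (hx : 0 ≤ x) :
    arcsinp p (x / (1 + x ^ p) ^ (1 / p)) = arctanp p x := by
  have hp0 : (0:ℝ) < p := by linarith
  set f : ℝ → ℝ := fun s => s * (1 + s ^ p) ^ (-1/p) with hf
  have hpos : ∀ s : ℝ, 0 ≤ s → 0 < 1 + s ^ p := fun s hs => by
    have := Real.rpow_nonneg hs p; linarith
  have huIcc : Set.uIcc (0:ℝ) x = Set.Icc 0 x := Set.uIcc_of_le hx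
  have key : ∀ s ∈ Set.uIcc (0:ℝ) x, HasDerivAt f ((1 + s ^ p) ^ (-1/p - 1)) s := by
    intro s hs
    rw [huIcc] at hs
    have := my_hasDerivAt (p := p) 1 hp hs.1 (by simpa using hpos s hs.1)
    simpa using this
  have hcont : ContinuousOn (fun s => (1 + s ^ p) ^ (-1/p - 1)) (Set.uIcc (0:ℝ) x) := by
    intro s hs
    rw [huIcc] at hs
    apply ContinuousAt.continuousWithinAt
    have hc : ContinuousAt (fun s : ℝ => 1 + s ^ p) s :=
      continuousAt_const.add (Real.continuousAt_rpow_const s p (Or.inr hp0.le))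
    exact hc.rpow_const (Or.inl (hpos s hs.1).ne')
  have hfp : ∀ s : ℝ, 0 ≤ s → (f s) ^ p = s ^ p * (1 + s ^ p)⁻¹ := fun s hs =>
    my_fpow hp hs (hpos s hs)
  have hfp_lt : ∀ s : ℝ, 0 ≤ s → (f s) ^ p < 1 := by
    intro s hs
    rw [hfp s hs, ← div_eq_mul_inv]
    exact (div_lt_one (hpos s hs)).mpr (by linarith)
  have hg : ContinuousOn (fun t => (1 - t ^ p) ^ (-1/p)) (f '' Set.uIcc (0:ℝ) x) := by
    rintro t ⟨s, hs, rfl⟩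
    rw [huIcc] at hs
    apply ContinuousAt.continuousWithinAt
    have hne : 1 - (f s) ^ p ≠ 0 := by have := hfp_lt s hs.1; intro h; linarith [h]
    have hc : ContinuousAt (fun t : ℝ => 1 - t ^ p) (f s) :=
      continuousAt_const.sub (Real.continuousAt_rpow_const _ p (Or.inr hp0.le))
    exact hc.rpow_const (Or.inl hne)
  have sub := intervalIntegral.integral_comp_smul_deriv' key hcont hg
  have hf0 : f 0 = 0 := by simp [hf]
  have hfx : f x = x / (1 + x ^ p) ^ (1 / p) := by
    rw [hf]
    simp only
    rw [my_rpow_neg_inv (hpos x hx).le]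
    exact (div_eq_mul_inv _ _).symm
  rw [hf0, hfx] at sub
  rw [arcsinp, arctanp, ← sub]
  apply intervalIntegral.integral_congr
  intro s hs
  rw [huIcc] at hs
  have hs0 : 0 ≤ s := hs.1
  have hA := hpos s hs0
  simp only [Function.comp, smul_eq_mul]
  rw [hfp s hs0]
  have e : 1 - s ^ p * (1 + s ^ p)⁻¹ = (1 + s ^ p)⁻¹ := by field_simp; ring
  rw [e, show ((1 + s ^ p)⁻¹ : ℝ) = (1 + s ^ p) ^ (-1:ℝ) from (Real.rpow_neg_one _).symm,
    ← Real.rpow_mul hA.le, ← Real.rpow_add hA]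
  rw [show -1/p - 1 + -1 * (-1/p) = (-1:ℝ) from by ring, Real.rpow_neg_one]

lemma my_id2 (p x : ℝ) (hp : 1 < p) (hx0 : 0 ≤ x) (hx1 : x < 1) :
    arcsinp p x = arctanp p (x / (1 - x ^ p) ^ (1 / p)) := by
  have hp0 : (0:ℝ) < p := by linarith
  set f : ℝ → ℝ := fun s => s * (1 - s ^ p) ^ (-1/p) with hf
  have huIcc : Set.uIcc (0:ℝ) x = Set.Icc 0 x := Set.uIcc_of_le hx0
  have hpos : ∀ s : ℝ, s ∈ Set.Icc (0:ℝ) x → 0 < 1 - s ^ p := by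
    intro s hs
    have h1 : s ^ p ≤ x ^ p := Real.rpow_le_rpow hs.1 hs.2 hp0.le
    have h2 : x ^ p < 1 := Real.rpow_lt_one hx0 hx1 hp0
    linarith
  have key : ∀ s ∈ Set.uIcc (0:ℝ) x, HasDerivAt f ((1 - s ^ p) ^ (-1/p - 1)) s := by
    intro s hs
    rw [huIcc] at hs
    have hA : 0 < 1 + (-1) * s ^ p := by have := hpos s hs; linarith
    have := my_hasDerivAt (p := p) (-1) hp hs.1 hA
    simp only [neg_one_mul, ← sub_eq_add_neg] at this
    exact this
  have hcont : ContinuousOn (fun s => (1 - s ^ p) ^ (-1/p - 1)) (Set.uIcc (0:ℝ) x) := by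
    intro s hs
    rw [huIcc] at hs
    apply ContinuousAt.continuousWithinAt
    have hc : ContinuousAt (fun s : ℝ => 1 - s ^ p) s :=
      continuousAt_const.sub (Real.continuousAt_rpow_const s p (Or.inr hp0.le))
    exact hc.rpow_const (Or.inl (hpos s hs).ne')
  have hg : ContinuousOn (fun t => (1 + t ^ p)⁻¹) (f '' Set.uIcc (0:ℝ) x) := by
    rintro t ⟨s, hs, rfl⟩
    rw [huIcc] at hs
    apply ContinuousAt.continuousWithinAt
    have hfs : 0 ≤ f s := mul_nonneg hs.1 (Real.rpow_nonneg (hpos s hs).le _)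
    have hne : (1:ℝ) + (f s) ^ p ≠ 0 := by
      have := Real.rpow_nonneg hfs p; positivity
    exact (continuousAt_const.add (Real.continuousAt_rpow_const _ p (Or.inr hp0.le))).inv₀ hne
  have sub := intervalIntegral.integral_comp_smul_deriv' key hcont hg
  have hf0 : f 0 = 0 := by simp [hf]
  have hfx : f x = x / (1 - x ^ p) ^ (1 / p) := by
    rw [hf]
    simp only
    rw [my_rpow_neg_inv (hpos x (Set.mem_Icc.mpr ⟨hx0, le_refl x⟩)).le]
    exact (div_eq_mul_inv _ _).symm
  rw [hf0, hfx] at sub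
  rw [arcsinp, arctanp, ← sub]
  apply intervalIntegral.integral_congr
  intro s hs
  rw [huIcc] at hs
  have hs0 : 0 ≤ s := hs.1
  have hA := hpos s hs
  simp only [Function.comp, smul_eq_mul]
  rw [my_fpow hp hs0 hA]
  have e : 1 + s ^ p * (1 - s ^ p)⁻¹ = (1 - s ^ p)⁻¹ := by field_simp; ring
  rw [e, inv_inv, ← Real.rpow_add_one hA.ne' (-1/p - 1)]
  congr 1
  ring

theorem arcsinp_arccosp_arctanp_identities (p x : ℝ) (hp : 1 < p)
    (hx : x ∈ Set.Ioo (0:ℝ) 1) :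
    arcsinp p (x / (1 + x ^ p) ^ (1 / p)) = arctanp p x ∧
      arcsinp p x = arctanp p (x / (1 - x ^ p) ^ (1 / p)) ∧
      arccosp p x = arctanp p ((1 - x ^ p) ^ (1 / p) / x) ∧
      arccosp p (1 / (1 + x ^ p) ^ (1 / p)) = arctanp p x := by
  obtain ⟨hx0, hx1⟩ := hx
  have hp0 : (0:ℝ) < p := by linarith
  have hpne : (p:ℝ) ≠ 0 := hp0.ne'
  have hxp0 : 0 < x ^ p := Real.rpow_pos_of_pos hx0 p
  have hxp1 : x ^ p < 1 := Real.rpow_lt_one hx0.le hx1 hp0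
  have h1 := my_id1 p x hp hx0.le
  have h2 := my_id2 p x hp hx0.le hx1
  refine ⟨h1, h2, ?_, ?_⟩
  · -- identity 3
    set y : ℝ := (1 - x ^ p) ^ (1 / p) with hy
    have hy0 : 0 ≤ y := Real.rpow_nonneg (by linarith) _
    have hy1 : y < 1 := Real.rpow_lt_one (by linarith) (by linarith) (by positivity)
    have hyp : y ^ p = 1 - x ^ p := by
      rw [hy, ← Real.rpow_mul (by linarith : (0:ℝ) ≤ 1 - x ^ p),
        one_div_mul_cancel hpne, Real.rpow_one]
    have := my_id2 p y hp hy0 hy1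
    rw [arccosp, ← hy, this, hyp]
    congr 1
    rw [show (1:ℝ) - (1 - x ^ p) = x ^ p from by ring,
      ← Real.rpow_mul hx0.le, mul_one_div_cancel hpne, Real.rpow_one]
  · -- identity 4
    have hA : (0:ℝ) < 1 + x ^ p := by linarith
    have hA1p : (0:ℝ) < (1 + x ^ p) ^ (1/p) := Real.rpow_pos_of_pos hA _
    have e1 : ((1:ℝ) / (1 + x ^ p) ^ (1 / p)) ^ p = (1 + x ^ p)⁻¹ := by
      rw [one_div, ← Real.rpow_neg_one ((1 + x ^ p) ^ (1 / p)), ← Real.rpow_mul hA.le,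
        ← Real.rpow_mul hA.le, show 1 / p * (-1) * p = (-1:ℝ) from by field_simp,
        Real.rpow_neg_one]
    have key : (1 : ℝ) - (1 / (1 + x ^ p) ^ (1 / p)) ^ p = x ^ p * (1 + x ^ p)⁻¹ := by
      rw [e1]
      field_simp
      ring
    rw [arccosp, key]
    have e2 : (x ^ p * (1 + x ^ p)⁻¹) ^ (1 / p) = x / (1 + x ^ p) ^ (1 / p) := by
      rw [Real.mul_rpow hxp0.le (inv_nonneg.mpr hA.le), Real.inv_rpow hA.le,
        ← Real.rpow_mul hx0.le, mul_one_div_cancel hpne, Real.rpow_one]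
      exact (div_eq_mul_inv _ _).symm
    rw [e2]
    exact h1
end

section
/- For every x ∈ (0,1), one has x^(x/√(1−x²)) < (arcsin x)^(arcsin x) < (π/2)^(π/2) · x^(x/√(1−x²)). -/
open Real

private lemma f_hasDeriv (t : ℝ) (ht : t ∈ Set.Ioo 0 (π/2)) :
    HasDerivAt (fun u : ℝ => u * Real.log u - Real.tan u * Real.log (Real.sin u))
      (Real.log t - 1 / Real.cos t ^ 2 * Real.log (Real.sin t)) t := by
  obtain ⟨ht0, htp⟩ := ht
  have hsin : 0 < Real.sin t := Real.sin_pos_of_pos_of_lt_pi ht0 (htp.trans (by linarith [Real.pi_pos]))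
  have hcos : 0 < Real.cos t := Real.cos_pos_of_mem_Ioo ⟨by linarith [Real.pi_pos], htp⟩
  have h1 : HasDerivAt (fun u : ℝ => u * Real.log u) (Real.log t + 1) t :=
    Real.hasDerivAt_mul_log ht0.ne'
  have h2 : HasDerivAt Real.tan (1 / Real.cos t ^ 2) t := Real.hasDerivAt_tan hcos.ne'
  have h3 : HasDerivAt (fun u : ℝ => Real.log (Real.sin u)) (Real.cos t / Real.sin t) t :=
    (Real.hasDerivAt_sin t).log hsin.ne'
  have h4 := h2.mul h3
  have := h1.sub h4
  refine this.congr_deriv ?_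
  have htan : Real.tan t = Real.sin t / Real.cos t := Real.tan_eq_sin_div_cos t
  rw [htan]
  field_simp
  ring

private lemma f_strictMono : StrictMonoOn
    (fun u : ℝ => u * Real.log u - Real.tan u * Real.log (Real.sin u)) (Set.Ioo 0 (π/2)) := by
  have hint : interior (Set.Ioo (0:ℝ) (π/2)) = Set.Ioo 0 (π/2) := interior_Ioo
  apply strictMonoOn_of_hasDerivWithinAt_pos (convex_Ioo _ _)
    (f := fun u : ℝ => u * Real.log u - Real.tan u * Real.log (Real.sin u))
    (f' := fun u => Real.log u - 1 / Real.cos u ^ 2 * Real.log (Real.sin u))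
  · intro u hu
    exact ((f_hasDeriv u hu).continuousAt).continuousWithinAt
  · intro u hu
    rw [hint] at hu ⊢
    exact (f_hasDeriv u hu).hasDerivWithinAt
  · intro u hu
    rw [hint] at hu
    obtain ⟨hu0, hup⟩ := hu
    have hsin : 0 < Real.sin u := Real.sin_pos_of_pos_of_lt_pi hu0 (hup.trans (by linarith [Real.pi_pos]))
    have hsin1 : Real.sin u < 1 := by
      have hcos : 0 < Real.cos u := Real.cos_pos_of_mem_Ioo ⟨by linarith [Real.pi_pos], hup⟩
      nlinarith [Real.sin_sq_add_cos_sq u]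
    have hcos : 0 < Real.cos u := Real.cos_pos_of_mem_Ioo ⟨by linarith [Real.pi_pos], hup⟩
    have hL : Real.log (Real.sin u) < 0 := Real.log_neg hsin hsin1
    have hsec : 1 ≤ 1 / Real.cos u ^ 2 := by
      rw [le_div_iff₀ (by positivity)]
      nlinarith [Real.cos_le_one u]
    have h1 : 1 / Real.cos u ^ 2 * Real.log (Real.sin u) ≤ Real.log (Real.sin u) := by
      nlinarith
    have h2 : Real.log (Real.sin u) < Real.log u :=
      Real.log_lt_log hsin (Real.sin_lt hu0)
    linarith

private lemma f_lt_limit (t : ℝ) (ht : t ∈ Set.Ioo 0 (π/2)) :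
    t * Real.log t - Real.tan t * Real.log (Real.sin t) < (π/2) * Real.log (π/2) := by
  obtain ⟨ht0, htp⟩ := ht
  set f : ℝ → ℝ := fun u => u * Real.log u - Real.tan u * Real.log (Real.sin u) with hf
  -- limit of f at π/2 from the left
  have hpi : (0:ℝ) < π/2 := by positivity
  have hlim : Filter.Tendsto f (nhdsWithin (π/2) (Set.Iio (π/2)))
      (nhds ((π/2) * Real.log (π/2))) := by
    have h1 : Filter.Tendsto (fun u : ℝ => u * Real.log u) (nhdsWithin (π/2) (Set.Iio (π/2)))
        (nhds ((π/2) * Real.log (π/2))) := by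
      apply Filter.Tendsto.mono_left _ nhdsWithin_le_nhds
      exact (continuousAt_id.mul (Real.continuousAt_log hpi.ne')).tendsto
    have h2 : Filter.Tendsto (fun u : ℝ => Real.tan u * Real.log (Real.sin u))
        (nhdsWithin (π/2) (Set.Iio (π/2))) (nhds 0) := by
      have hb : ∀ u ∈ Set.Ioo (π/4) (π/2),
          Real.tan u * Real.log (Real.sin u) ∈ Set.Icc (-Real.cos u) 0 := by
        intro u ⟨hu0, hup⟩
        have hu0' : (0:ℝ) < u := lt_trans (by positivity) hu0
        have hsin : 0 < Real.sin u := Real.sin_pos_of_pos_of_lt_pi hu0' (hup.trans (by linarith [Real.pi_pos]))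
        have hcos : 0 < Real.cos u := Real.cos_pos_of_mem_Ioo ⟨by linarith [Real.pi_pos], hup⟩
        have hsin1 : Real.sin u < 1 := by nlinarith [Real.sin_sq_add_cos_sq u]
        have hL : Real.log (Real.sin u) < 0 := Real.log_neg hsin hsin1
        have htan : 0 < Real.tan u := Real.tan_pos_of_pos_of_lt_pi_div_two hu0' hup
        constructor
        · -- -cos u ≤ tan u * log (sin u), i.e. -tan u * log sin u ≤ cos u
          have hlog : -Real.log (Real.sin u) ≤ (1 - Real.sin u) / Real.sin u := by
            have h := Real.log_le_sub_one_of_pos (show (0:ℝ) < 1 / Real.sin u by positivity)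
            rw [one_div, Real.log_inv] at h
            have heq : (1 - Real.sin u) / Real.sin u = (Real.sin u)⁻¹ - 1 := by
              field_simp
            rw [heq]; linarith
          have h1s : 1 - Real.sin u ≤ Real.cos u ^ 2 := by
            nlinarith [Real.sin_sq_add_cos_sq u]
          have key : Real.tan u * (-Real.log (Real.sin u)) ≤ Real.cos u := by
            calc Real.tan u * (-Real.log (Real.sin u))
                ≤ Real.tan u * ((1 - Real.sin u) / Real.sin u) := by
                  exact mul_le_mul_of_nonneg_left hlog htan.le
              _ ≤ Real.tan u * (Real.cos u ^ 2 / Real.sin u) := by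
                  gcongr
              _ = Real.cos u := by
                  rw [Real.tan_eq_sin_div_cos]; field_simp
          linarith
        · exact mul_nonpos_of_nonneg_of_nonpos htan.le hL.le
      have hmem : Set.Ioo (π/4) (π/2) ∈ nhdsWithin (π/2) (Set.Iio (π/2)) :=
        Ioo_mem_nhdsLT_of_mem ⟨by linarith [Real.pi_pos], le_refl _⟩
      have hcoslim : Filter.Tendsto (fun u : ℝ => Real.cos u)
          (nhdsWithin (π/2) (Set.Iio (π/2))) (nhds 0) := by
        have : Filter.Tendsto Real.cos (nhds (π/2)) (nhds (Real.cos (π/2))) :=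
          Real.continuous_cos.continuousAt
        rw [Real.cos_pi_div_two] at this
        exact this.mono_left nhdsWithin_le_nhds
      have hncoslim : Filter.Tendsto (fun u : ℝ => -Real.cos u)
          (nhdsWithin (π/2) (Set.Iio (π/2))) (nhds 0) := by
        simpa using hcoslim.neg
      apply tendsto_of_tendsto_of_tendsto_of_le_of_le' hncoslim tendsto_const_nhds
      · filter_upwards [hmem] with u hu using (hb u hu).1
      · filter_upwards [hmem] with u hu using (hb u hu).2
    simpa using h1.sub h2
  -- pick midpoint s
  set s : ℝ := (t + π/2) / 2 with hs
  have hts : t < s := by simp only [hs]; linarith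
  have hsp : s < π/2 := by simp only [hs]; linarith
  have hs0 : 0 < s := lt_trans ht0 hts
  have h1 : f t < f s := f_strictMono ⟨ht0, htp⟩ ⟨hs0, hsp⟩ hts
  have h2 : f s ≤ (π/2) * Real.log (π/2) := by
    apply ge_of_tendsto hlim
    have hmem : Set.Ioo s (π/2) ∈ nhdsWithin (π/2) (Set.Iio (π/2)) :=
      Ioo_mem_nhdsLT_of_mem ⟨hsp, le_refl _⟩
    filter_upwards [hmem] with u hu
    exact (f_strictMono ⟨hs0, hsp⟩ ⟨lt_trans hs0 hu.1, hu.2⟩ hu.1).le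
  exact lt_of_lt_of_le h1 h2

theorem arcsin_pow_arcsin_bounds (x : ℝ) (hx : x ∈ Set.Ioo (0:ℝ) 1) :
    x ^ (x / Real.sqrt (1 - x ^ 2)) < Real.arcsin x ^ Real.arcsin x ∧
      Real.arcsin x ^ Real.arcsin x <
        (π / 2) ^ (π / 2) * x ^ (x / Real.sqrt (1 - x ^ 2)) := by
  obtain ⟨hx0, hx1⟩ := hx
  set t := Real.arcsin x with htdef
  have ht0 : 0 < t := Real.arcsin_pos.2 hx0
  have htp : t < π/2 := Real.arcsin_lt_pi_div_two.2 hx1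
  have hsin : Real.sin t = x := Real.sin_arcsin (by linarith) hx1.le
  have htan : x / Real.sqrt (1 - x ^ 2) = Real.tan t := (Real.tan_arcsin x).symm
  have hxt : x < t := by
    have := Real.sin_lt ht0
    rw [hsin] at this; exact this
  have httan : t < Real.tan t := Real.lt_tan ht0 htp
  have hlogx : Real.log x < 0 := Real.log_neg hx0 hx1
  have hpi : (0:ℝ) < π/2 := by positivity
  rw [htan, Real.rpow_def_of_pos hx0, Real.rpow_def_of_pos ht0, Real.rpow_def_of_pos hpi,
    ← Real.exp_add]
  constructor
  · apply Real.exp_lt_exp.2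
    have h1 : Real.tan t * Real.log x < t * Real.log x :=
      mul_lt_mul_of_neg_right httan hlogx
    have h2 : t * Real.log x < t * Real.log t :=
      mul_lt_mul_of_pos_left (Real.log_lt_log hx0 hxt) ht0
    linarith
  · apply Real.exp_lt_exp.2
    have := f_lt_limit t ⟨ht0, htp⟩
    rw [hsin] at this
    linarith
end
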